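/- For distributions u1, u0 on {0,1,...,m}, there exists a joint distribution of a binary state ω ∈ {0,1} and m exchangeable binary signals with Pr[s_i = H | ω=1] = a and Pr[s_i = H | ω=0] = b, such that the number X of H-signals satisfies Pr[X=x | ω=1] = u1(x) and Pr[X=x | ω=0] = u0(x), if and only if E_{x∼u1}[x] = m·a and E_{x∼u0}[x] = m·b. -/

import Mathlib

open Finset

private def cnt {m : ℕ} (s : Fin m → Bool) : ℕ := (Finset.univ.filter (fun i => s i)).card

private lemma cnt_le {m : ℕ} (s : Fin m → Bool) : cnt s ≤ m := by
  simpa [cnt] using (Finset.card_filter_le Finset.univ (fun i => s i)).trans (by simp)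

private def cfin {m : ℕ} (s : Fin m → Bool) : Fin (m + 1) :=
  ⟨cnt s, Nat.lt_succ_of_le (cnt_le s)⟩

private lemma cnt_comp {m : ℕ} (π : Equiv.Perm (Fin m)) (s : Fin m → Bool) :
    cnt (s ∘ π) = cnt s := by
  unfold cnt
  have : (Finset.univ.filter (fun i => (s ∘ π) i))
      = (Finset.univ.filter (fun i => s i)).map π.symm.toEmbedding := by
    ext j
    simp only [Finset.mem_filter, Finset.mem_univ, true_and, Finset.mem_map,
      Equiv.coe_toEmbedding, Function.comp_apply]
    constructor
    · intro h; exact ⟨π j, h, Equiv.symm_apply_apply _ _⟩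
    · rintro ⟨i, hi, rfl⟩; simpa using hi
  rw [this, Finset.card_map]

private lemma card_cnt_fiber {m : ℕ} (x : ℕ) :
    (Finset.univ.filter (fun s : Fin m → Bool => cnt s = x)).card = m.choose x := by
  have h := Finset.card_powersetCard x (Finset.univ : Finset (Fin m))
  rw [Finset.card_univ, Fintype.card_fin] at h
  rw [← h]
  apply Finset.card_nbij' (i := fun s : Fin m → Bool => Finset.univ.filter (fun i => s i))
    (j := fun t : Finset (Fin m) => fun i => decide (i ∈ t))
  · intro s hs
    simp only [Finset.mem_coe, Finset.mem_filter, Finset.mem_univ, true_and] at hs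
    simp [Finset.mem_powersetCard]
    exact hs
  · intro t ht
    simp only [Finset.mem_coe, Finset.mem_powersetCard] at ht
    simp only [Finset.mem_coe, Finset.mem_filter, Finset.mem_univ, true_and, cnt]
    refine Finset.mem_filter.mpr ⟨Finset.mem_univ _, ?_⟩
    rw [← ht.2]
    congr 1
    ext i; simp
  · intro s _
    funext i; simp
  · intro t _
    ext i; simp

private lemma sum_marg {m : ℕ} (P : (Fin m → Bool) → ℝ) :
    ∑ i : Fin m, ∑ s ∈ Finset.univ.filter (fun s : Fin m → Bool => s i), P s
      = ∑ s : Fin m → Bool, (cnt s : ℝ) * P s := by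
  simp_rw [Finset.sum_filter]
  rw [Finset.sum_comm]
  refine Finset.sum_congr rfl fun s _ => ?_
  rw [← Finset.sum_filter, Finset.sum_const, nsmul_eq_mul]
  rfl

private lemma mean_eq {m : ℕ} (P : (Fin m → Bool) → ℝ) (u : Fin (m + 1) → ℝ)
    (h : ∀ x : Fin (m + 1),
      ∑ s ∈ Finset.univ.filter (fun s : Fin m → Bool => cnt s = (x : ℕ)), P s = u x) :
    ∑ s : Fin m → Bool, (cnt s : ℝ) * P s = ∑ x : Fin (m + 1), ((x : ℕ) : ℝ) * u x := by
  rw [← Finset.sum_fiberwise Finset.univ cfin (fun s => (cnt s : ℝ) * P s)]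
  refine Finset.sum_congr rfl fun x _ => ?_
  have hset : Finset.univ.filter (fun s : Fin m → Bool => cfin s = x)
      = Finset.univ.filter (fun s : Fin m → Bool => cnt s = (x : ℕ)) := by
    ext s; simp [cfin, Fin.ext_iff]
  calc ∑ s ∈ Finset.univ.filter (fun s : Fin m → Bool => cfin s = x), (cnt s : ℝ) * P s
      = ∑ s ∈ Finset.univ.filter (fun s : Fin m → Bool => cnt s = (x : ℕ)),
          ((x : ℕ) : ℝ) * P s := by
        rw [hset]
        refine Finset.sum_congr rfl fun s hs => ?_
        simp only [Finset.mem_filter] at hs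
        rw [hs.2]
    _ = ((x : ℕ) : ℝ) * u x := by rw [← Finset.mul_sum, h x]

private lemma marg_const {m : ℕ} (P : (Fin m → Bool) → ℝ)
    (hP : ∀ (π : Equiv.Perm (Fin m)) (s : Fin m → Bool), P (s ∘ π) = P s) (i j : Fin m) :
    ∑ s ∈ Finset.univ.filter (fun s : Fin m → Bool => s i), P s
      = ∑ s ∈ Finset.univ.filter (fun s : Fin m → Bool => s j), P s := by
  apply Finset.sum_nbij' (i := fun s : Fin m → Bool => s ∘ (Equiv.swap i j))
    (j := fun s : Fin m → Bool => s ∘ (Equiv.swap i j))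
  · intro s hs
    simp only [Finset.mem_filter, Finset.mem_univ, true_and] at hs ⊢
    simpa [Equiv.swap_apply_right] using hs
  · intro s hs
    simp only [Finset.mem_filter, Finset.mem_univ, true_and] at hs ⊢
    simpa [Equiv.swap_apply_left] using hs
  · intro s _
    funext k; simp
  · intro s _
    funext k; simp
  · intro s _
    exact (hP (Equiv.swap i j) s).symm

private lemma construct {m : ℕ} (hm : 0 < m) (a : ℝ) (u : Fin (m + 1) → ℝ)
    (hnn : ∀ x, 0 ≤ u x) (hsum : ∑ x, u x = 1)
    (hmean : ∑ x : Fin (m + 1), ((x : ℕ) : ℝ) * u x = m * a) :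
    ∃ P : (Fin m → Bool) → ℝ,
      (∀ s, 0 ≤ P s) ∧ (∑ s, P s = 1) ∧
      (∀ (π : Equiv.Perm (Fin m)) (s : Fin m → Bool), P (s ∘ π) = P s) ∧
      (∀ i : Fin m, ∑ s ∈ Finset.univ.filter (fun s : Fin m → Bool => s i), P s = a) ∧
      (∀ x : Fin (m + 1),
        ∑ s ∈ Finset.univ.filter (fun s : Fin m → Bool => cnt s = (x : ℕ)), P s = u x) := by
  refine ⟨fun s => u (cfin s) / (m.choose (cnt s)), ?_, ?_, ?_, ?_, ?_⟩
  case refine_3 =>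
    intro π s
    simp only [cfin, cnt_comp]
  all_goals
    have hcount : ∀ x : Fin (m + 1),
        ∑ s ∈ Finset.univ.filter (fun s : Fin m → Bool => cnt s = (x : ℕ)),
          u (cfin s) / (m.choose (cnt s)) = u x := by
      intro x
      have hchoose : (0 : ℝ) < (m.choose (x : ℕ) : ℝ) := by
        exact_mod_cast Nat.choose_pos (Nat.lt_succ_iff.mp x.isLt)
      have : ∀ s ∈ Finset.univ.filter (fun s : Fin m → Bool => cnt s = (x : ℕ)),
          u (cfin s) / (m.choose (cnt s)) = u x / (m.choose (x : ℕ)) := by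
        intro s hs
        simp only [Finset.mem_filter] at hs
        have hc : cfin s = x := Fin.ext hs.2
        rw [hc, hs.2]
      rw [Finset.sum_congr rfl this, Finset.sum_const, card_cnt_fiber, nsmul_eq_mul]
      field_simp
  · intro s
    have : (0 : ℝ) ≤ (m.choose (cnt s) : ℝ) := by positivity
    exact div_nonneg (hnn _) this
  · rw [← Finset.sum_fiberwise Finset.univ cfin
      (fun s => u (cfin s) / (m.choose (cnt s)))]
    rw [← hsum]
    refine Finset.sum_congr rfl fun x _ => ?_
    have hset : Finset.univ.filter (fun s : Fin m → Bool => cfin s = x)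
        = Finset.univ.filter (fun s : Fin m → Bool => cnt s = (x : ℕ)) := by
      ext s; simp [cfin, Fin.ext_iff]
    rw [hset, hcount x]
  · -- marginals
    intro i
    set P : (Fin m → Bool) → ℝ := fun s => u (cfin s) / (m.choose (cnt s)) with hPdef
    have hex : ∀ (π : Equiv.Perm (Fin m)) (s : Fin m → Bool), P (s ∘ π) = P s := by
      intro π s; simp only [hPdef, cfin, cnt_comp]
    have htot : ∑ j : Fin m, ∑ s ∈ Finset.univ.filter (fun s : Fin m → Bool => s j), P s
        = m * a := by
      rw [sum_marg, mean_eq P u hcount, hmean]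
    have hconst : ∀ j : Fin m,
        ∑ s ∈ Finset.univ.filter (fun s : Fin m → Bool => s j), P s
          = ∑ s ∈ Finset.univ.filter (fun s : Fin m → Bool => s i), P s := fun j =>
      marg_const P hex j i
    rw [Finset.sum_congr rfl (fun j _ => hconst j), Finset.sum_const, Finset.card_univ,
      Fintype.card_fin, nsmul_eq_mul] at htot
    have hm' : ((m : ℝ)) ≠ 0 := by exact_mod_cast hm.ne'
    exact mul_left_cancel₀ hm' htot
  · exact hcount

theorem stmt_0 (m : ℕ) (hm : 0 < m) (a b : ℝ)
    (ha : a ∈ Set.Icc (0:ℝ) 1) (hb : b ∈ Set.Icc (0:ℝ) 1)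
    (u1 u0 : Fin (m + 1) → ℝ)
    (hu1nn : ∀ x, 0 ≤ u1 x) (hu1sum : ∑ x, u1 x = 1)
    (hu0nn : ∀ x, 0 ≤ u0 x) (hu0sum : ∑ x, u0 x = 1) :
    (∃ P1 P0 : (Fin m → Bool) → ℝ,
      -- conditional distributions over signal profiles:
      (∀ s, 0 ≤ P1 s) ∧ (∑ s, P1 s = 1) ∧
      (∀ s, 0 ≤ P0 s) ∧ (∑ s, P0 s = 1) ∧
      -- exchangeability:
      (∀ (π : Equiv.Perm (Fin m)) (s : Fin m → Bool), P1 (s ∘ π) = P1 s) ∧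
      (∀ (π : Equiv.Perm (Fin m)) (s : Fin m → Bool), P0 (s ∘ π) = P0 s) ∧
      -- per-expert marginals:
      (∀ i : Fin m, ∑ s ∈ Finset.univ.filter (fun s : Fin m → Bool => s i), P1 s = a) ∧
      (∀ i : Fin m, ∑ s ∈ Finset.univ.filter (fun s : Fin m → Bool => s i), P0 s = b) ∧
      -- distribution of the number of H-signals:
      (∀ x : Fin (m + 1),
        ∑ s ∈ Finset.univ.filter
            (fun s : Fin m → Bool =>
              (Finset.univ.filter (fun i => s i)).card = (x : ℕ)), P1 s = u1 x) ∧
      (∀ x : Fin (m + 1),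
        ∑ s ∈ Finset.univ.filter
            (fun s : Fin m → Bool =>
              (Finset.univ.filter (fun i => s i)).card = (x : ℕ)), P0 s = u0 x))
    ↔ ((∑ x : Fin (m + 1), ((x : ℕ) : ℝ) * u1 x = m * a) ∧
       (∑ x : Fin (m + 1), ((x : ℕ) : ℝ) * u0 x = m * b)) := by
  constructor
  · rintro ⟨P1, P0, _, _, _, _, _, _, hmarg1, hmarg0, hcnt1, hcnt0⟩
    constructor
    · rw [← mean_eq P1 u1 hcnt1, ← sum_marg P1,
        Finset.sum_congr rfl (fun i _ => hmarg1 i), Finset.sum_const, Finset.card_univ,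
        Fintype.card_fin, nsmul_eq_mul]
    · rw [← mean_eq P0 u0 hcnt0, ← sum_marg P0,
        Finset.sum_congr rfl (fun i _ => hmarg0 i), Finset.sum_const, Finset.card_univ,
        Fintype.card_fin, nsmul_eq_mul]
  · rintro ⟨h1, h0⟩
    obtain ⟨P1, hP1nn, hP1sum, hP1ex, hP1marg, hP1cnt⟩ :=
      construct hm a u1 hu1nn hu1sum h1
    obtain ⟨P0, hP0nn, hP0sum, hP0ex, hP0marg, hP0cnt⟩ :=
      construct hm b u0 hu0nn hu0sum h0
    exact ⟨P1, P0, hP1nn, hP1sum, hP0nn, hP0sum, hP1ex, hP0ex, hP1marg, hP0marg,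
      hP1cnt, hP0cnt⟩
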